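/- Let X_1,…,X_n ∈ {0,1} be independent random variables and let f : {0,1}^n → ℝ be self-bounding, with Z = f(X_1,…,X_n). Then for every δ > 0, Pr[Z ≤ (1−δ) E[Z]] ≤ e^{−δ² E[Z] / 2}. -/

import Mathlib

open MeasureTheory ProbabilityTheory Finset

/-- A function `f : {0,1}ⁿ → ℝ` is self-bounding if there are functions `g i`
not depending on the `i`-th coordinate such that `0 ≤ f(x) − g i x ≤ 1` for all
`x, i` and `∑ᵢ (f(x) − g i x) ≤ f(x)` for all `x`. -/
def SelfBounding {n : ℕ} (f : (Fin n → Bool) → ℝ) : Prop :=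
  ∃ g : Fin n → (Fin n → Bool) → ℝ,
    (∀ (i : Fin n) (x : Fin n → Bool) (b : Bool),
      g i (Function.update x i b) = g i x) ∧
    (∀ (x : Fin n → Bool) (i : Fin n), 0 ≤ f x - g i x ∧ f x - g i x ≤ 1) ∧
    (∀ x : Fin n → Bool, ∑ i, (f x - g i x) ≤ f x)

namespace SBP

variable {n : ℕ}

noncomputable def W (p : Fin n → Bool → ℝ) (x : Fin n → Bool) : ℝ := ∏ i, p i (x i)

noncomputable def Ex (p : Fin n → Bool → ℝ) (h : (Fin n → Bool) → ℝ) : ℝ := ∑ x, W p x * h x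

noncomputable def Av (p : Fin n → Bool → ℝ) (i : Fin n) (h : (Fin n → Bool) → ℝ)
    (x : Fin n → Bool) : ℝ := ∑ b, p i b * h (Function.update x i b)

variable {p : Fin n → Bool → ℝ}

def Good (p : Fin n → Bool → ℝ) : Prop := (∀ i b, 0 ≤ p i b) ∧ ∀ i, (∑ b, p i b) = 1

lemma upd_symm (i : Fin n) (b c : Bool) (y : {j // j ≠ i} → Bool) :
    Function.update ((Equiv.funSplitAt i Bool).symm (b, y)) i c
      = (Equiv.funSplitAt i Bool).symm (c, y) := by
  funext j
  rcases eq_or_ne j i with rfl | hj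
  · simp [Equiv.funSplitAt, Equiv.piSplitAt]
  · simp [Function.update_of_ne hj, Equiv.funSplitAt, Equiv.piSplitAt, hj]

lemma W_split (i : Fin n) (b : Bool) (y : {j // j ≠ i} → Bool) :
    W p ((Equiv.funSplitAt i Bool).symm (b, y))
      = p i b * ∏ j : {j // j ≠ i}, p j (y j) := by
  show (∏ j, p j (((Equiv.funSplitAt i Bool).symm (b, y)) j)) = _
  rw [Fintype.prod_eq_mul_prod_compl i (fun j => p j (((Equiv.funSplitAt i Bool).symm (b, y)) j)),
    Finset.prod_subtype (p := fun j => j ≠ i) ({i}ᶜ : Finset (Fin n)) (fun j => by simp)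
      (fun j => p j (((Equiv.funSplitAt i Bool).symm (b, y)) j))]
  congr 1
  · simp [Equiv.funSplitAt, Equiv.piSplitAt]
  · refine Finset.prod_congr rfl fun j _ => ?_
    simp [Equiv.funSplitAt, Equiv.piSplitAt, j.2]

lemma sum_split (i : Fin n) (h : (Fin n → Bool) → ℝ) :
    ∑ x, h x = ∑ b, ∑ y : {j // j ≠ i} → Bool, h ((Equiv.funSplitAt i Bool).symm (b, y)) := by
  rw [← Equiv.sum_comp (Equiv.funSplitAt i Bool).symm h, Fintype.sum_prod_type]

noncomputable def R (p : Fin n → Bool → ℝ) (i : Fin n) (y : {j // j ≠ i} → Bool) : ℝ :=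
  ∏ j : {j // j ≠ i}, p j (y j)

lemma R_nonneg (hp : Good p) (i : Fin n) (y : {j // j ≠ i} → Bool) : 0 ≤ R p i y :=
  Finset.prod_nonneg fun j _ => hp.1 j (y j)

lemma W_nonneg (hp : Good p) (x : Fin n → Bool) : 0 ≤ W p x :=
  Finset.prod_nonneg fun i _ => hp.1 i (x i)

lemma sum_W (hp : Good p) : ∑ x, W p x = 1 := by
  rw [show (∑ x, W p x) = ∑ x : Fin n → Bool, ∏ i, p i (x i) from rfl,
    ← Fintype.prod_sum (fun i b => p i b)]
  exact Finset.prod_eq_one fun i _ => hp.2 i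

lemma Av_update (i : Fin n) (h : (Fin n → Bool) → ℝ) (x : Fin n → Bool) (b : Bool) :
    Av p i h (Function.update x i b) = Av p i h x := by
  unfold Av
  exact Finset.sum_congr rfl fun c _ => by rw [Function.update_idem]

lemma Av_pos (hp : Good p) (i : Fin n) {h : (Fin n → Bool) → ℝ} (hh : ∀ z, 0 < h z)
    (x : Fin n → Bool) : 0 < Av p i h x := by
  unfold Av
  rw [Fintype.sum_bool]
  rcases eq_or_lt_of_le (hp.1 i true) with h1 | h1
  · have h2 : p i false = 1 := by have := hp.2 i; rw [Fintype.sum_bool] at this; linarith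
    rw [← h1, h2]; simpa using hh _
  · exact add_pos_of_pos_of_nonneg (mul_pos h1 (hh _))
      (mul_nonneg (hp.1 i false) (hh _).le)

lemma Av_symm (i : Fin n) (h : (Fin n → Bool) → ℝ) (b : Bool) (y : {j // j ≠ i} → Bool) :
    Av p i h ((Equiv.funSplitAt i Bool).symm (b, y))
      = ∑ c, p i c * h ((Equiv.funSplitAt i Bool).symm (c, y)) := by
  unfold Av
  exact Finset.sum_congr rfl fun c _ => by rw [upd_symm]

lemma Ex_split (i : Fin n) (h : (Fin n → Bool) → ℝ) :
    Ex p h = ∑ b, ∑ y : {j // j ≠ i} → Bool,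
      p i b * R p i y * h ((Equiv.funSplitAt i Bool).symm (b, y)) := by
  rw [Ex, sum_split i (fun x => W p x * h x)]
  exact Finset.sum_congr rfl fun b _ => Finset.sum_congr rfl fun y _ => by rw [W_split]; rfl

lemma Ex_Av (hp : Good p) (i : Fin n) (h : (Fin n → Bool) → ℝ) :
    Ex p (Av p i h) = Ex p h := by
  rw [Ex_split i (Av p i h), Ex_split i h]
  have : ∀ b, (∑ y : {j // j ≠ i} → Bool,
      p i b * R p i y * Av p i h ((Equiv.funSplitAt i Bool).symm (b, y)))
      = p i b * ∑ c, ∑ y : {j // j ≠ i} → Bool,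
        p i c * R p i y * h ((Equiv.funSplitAt i Bool).symm (c, y)) := by
    intro b
    have l1 : (∑ y : {j // j ≠ i} → Bool,
        p i b * R p i y * Av p i h ((Equiv.funSplitAt i Bool).symm (b, y)))
        = ∑ y : {j // j ≠ i} → Bool, ∑ c,
          p i b * (p i c * R p i y * h ((Equiv.funSplitAt i Bool).symm (c, y))) := by
      refine Finset.sum_congr rfl fun y _ => ?_
      rw [Av_symm, Finset.mul_sum]
      exact Finset.sum_congr rfl fun c _ => by ring
    rw [l1, Finset.sum_comm, Finset.mul_sum]
    refine Finset.sum_congr rfl fun c _ => ?_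
    rw [Finset.mul_sum]
  rw [Finset.sum_congr rfl fun b _ => this b, ← Finset.sum_mul]
  rw [hp.2 i, one_mul]

lemma Ex_of_indep (hp : Good p) (i : Fin n) {F : (Fin n → Bool) → ℝ}
    (hF : ∀ x b, F (Function.update x i b) = F x) :
    Ex p F = ∑ y : {j // j ≠ i} → Bool,
      R p i y * F ((Equiv.funSplitAt i Bool).symm (false, y)) := by
  rw [Ex_split i F]
  have : ∀ b y, F ((Equiv.funSplitAt i Bool).symm (b, y))
      = F ((Equiv.funSplitAt i Bool).symm (false, y)) := by
    intro b y
    rw [← upd_symm i false b, hF]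
  calc (∑ b, ∑ y : {j // j ≠ i} → Bool,
      p i b * R p i y * F ((Equiv.funSplitAt i Bool).symm (b, y)))
      = ∑ b, p i b * ∑ y : {j // j ≠ i} → Bool,
        R p i y * F ((Equiv.funSplitAt i Bool).symm (false, y)) := by
        refine Finset.sum_congr rfl fun b _ => ?_
        rw [Finset.mul_sum]
        exact Finset.sum_congr rfl fun y _ => by rw [this]; ring
    _ = _ := by rw [← Finset.sum_mul, hp.2 i, one_mul]

noncomputable def phi (t : ℝ) : ℝ := Real.exp t - t - 1

lemma phi_nonneg (t : ℝ) : 0 ≤ phi t := by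
  have := Real.add_one_le_exp t; unfold phi; linarith

lemma phi_scale {a c : ℝ} (ha0 : 0 ≤ a) (ha1 : a ≤ 1) : phi (a * c) ≤ a * phi c := by
  have h : Real.exp (a • c + (1 - a) • (0:ℝ)) ≤ a • Real.exp c + (1 - a) • Real.exp 0 :=
    convexOn_exp.2 (Set.mem_univ c) (Set.mem_univ (0:ℝ)) ha0 (by linarith) (by ring)
  simp only [smul_eq_mul, mul_zero, add_zero, Real.exp_zero, mul_one] at h
  unfold phi
  nlinarith [h]

lemma sum_pos_of {α : Type*} [Fintype α] (q Y : α → ℝ) (hq0 : ∀ a, 0 ≤ q a)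
    (hq1 : ∑ a, q a = 1) (hY : ∀ a, 0 < Y a) : 0 < ∑ a, q a * Y a := by
  obtain ⟨a, ha⟩ : ∃ a, 0 < q a := by
    by_contra hc
    push_neg at hc
    have : ∀ a ∈ Finset.univ, q a = 0 := fun a _ => le_antisymm (hc a) (hq0 a)
    rw [Finset.sum_congr rfl this] at hq1
    simp at hq1
  have h1 : 0 < q a * Y a := mul_pos ha (hY a)
  exact h1.trans_le (Finset.single_le_sum (fun b _ => mul_nonneg (hq0 b) (hY b).le)
    (Finset.mem_univ a))

lemma gibbs {α : Type*} [Fintype α] (q Y T : α → ℝ) (hq0 : ∀ a, 0 ≤ q a)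
    (hq1 : ∑ a, q a = 1) (hY : ∀ a, 0 < Y a) (hT : ∀ a, 0 < T a) :
    ∑ a, q a * (Y a * (Real.log (T a) - Real.log (∑ c, q c * T c)))
      ≤ (∑ a, q a * (Y a * Real.log (Y a)))
        - (∑ a, q a * Y a) * Real.log (∑ a, q a * Y a) := by
  set M := ∑ a, q a * Y a with hM
  set c := ∑ a, q a * T a with hc
  have hMpos : 0 < M := sum_pos_of q Y hq0 hq1 hY
  have hcpos : 0 < c := sum_pos_of q T hq0 hq1 hT
  have key : ∀ a, q a * (Y a * (Real.log (T a) - Real.log c))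
      ≤ q a * (Y a * Real.log (Y a)) - q a * Y a * Real.log M
        + (M / c) * (q a * T a) - q a * Y a := by
    intro a
    have hpos : 0 < T a * M / (c * Y a) :=
      div_pos (mul_pos (hT a) hMpos) (mul_pos hcpos (hY a))
    have hlog := Real.log_le_sub_one_of_pos hpos
    have hexp : Real.log (T a * M / (c * Y a))
        = Real.log (T a) + Real.log M - Real.log c - Real.log (Y a) := by
      rw [Real.log_div (mul_pos (hT a) hMpos).ne' (mul_pos hcpos (hY a)).ne',
        Real.log_mul (hT a).ne' hMpos.ne', Real.log_mul hcpos.ne' (hY a).ne']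
      ring
    rw [hexp] at hlog
    have h2 : Y a * (Real.log (T a) - Real.log c)
        ≤ Y a * Real.log (Y a) - Y a * Real.log M + (M / c) * T a - Y a := by
      have h3 := mul_le_mul_of_nonneg_left hlog (hY a).le
      have hY' : Y a ≠ 0 := (hY a).ne'
      have hc' : c ≠ 0 := hcpos.ne'
      have h4 : Y a * (T a * M / (c * Y a)) = (M / c) * T a := by
        field_simp
      nlinarith [h3, h4]
    calc q a * (Y a * (Real.log (T a) - Real.log c))
        ≤ q a * (Y a * Real.log (Y a) - Y a * Real.log M + (M / c) * T a - Y a) :=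
          mul_le_mul_of_nonneg_left h2 (hq0 a)
      _ = _ := by ring
  calc (∑ a, q a * (Y a * (Real.log (T a) - Real.log c)))
      ≤ ∑ a, (q a * (Y a * Real.log (Y a)) - q a * Y a * Real.log M
          + (M / c) * (q a * T a) - q a * Y a) := Finset.sum_le_sum fun a _ => key a
    _ = (∑ a, q a * (Y a * Real.log (Y a))) - M * Real.log M + (M / c) * c - M := by
        rw [Finset.sum_sub_distrib, Finset.sum_add_distrib, Finset.sum_sub_distrib,
          ← Finset.sum_mul, ← Finset.mul_sum, ← hM, ← hc]
    _ = (∑ a, q a * (Y a * Real.log (Y a))) - M * Real.log M := by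
        rw [div_mul_cancel₀ _ hcpos.ne']; ring
    _ ≤ _ := le_refl _

lemma ent_le_u {α : Type*} [Fintype α] (q Y : α → ℝ) (u : ℝ) (hq0 : ∀ a, 0 ≤ q a)
    (hq1 : ∑ a, q a = 1) (hY : ∀ a, 0 < Y a) (hu : 0 < u) :
    (∑ a, q a * (Y a * Real.log (Y a))) - (∑ a, q a * Y a) * Real.log (∑ a, q a * Y a)
      ≤ ∑ a, q a * (Y a * Real.log (Y a) - Y a * Real.log u - Y a + u) := by
  set M := ∑ a, q a * Y a with hM
  have hMpos : 0 < M := sum_pos_of q Y hq0 hq1 hY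
  have hrhs : (∑ a, q a * (Y a * Real.log (Y a) - Y a * Real.log u - Y a + u))
      = (∑ a, q a * (Y a * Real.log (Y a))) - M * Real.log u - M + u := by
    have : ∀ a, q a * (Y a * Real.log (Y a) - Y a * Real.log u - Y a + u)
        = q a * (Y a * Real.log (Y a)) - q a * Y a * Real.log u - q a * Y a + q a * u := by
      intro a; ring
    rw [Finset.sum_congr rfl fun a _ => this a, Finset.sum_add_distrib,
      Finset.sum_sub_distrib, Finset.sum_sub_distrib, ← Finset.sum_mul, ← Finset.sum_mul,
      ← hM, hq1, one_mul]
  rw [hrhs]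
  have hlog := Real.log_le_sub_one_of_pos (div_pos hu hMpos)
  rw [Real.log_div hu.ne' hMpos.ne'] at hlog
  have := mul_le_mul_of_nonneg_left hlog hMpos.le
  have h4 : M * (u / M - 1) = u - M := by field_simp
  nlinarith [this]

lemma Ex_mono (hp : Good p) {h1 h2 : (Fin n → Bool) → ℝ} (h : ∀ x, h1 x ≤ h2 x) :
    Ex p h1 ≤ Ex p h2 :=
  Finset.sum_le_sum fun x _ => mul_le_mul_of_nonneg_left (h x) (W_nonneg hp x)

lemma Av_mono (hp : Good p) (i : Fin n) {h1 h2 : (Fin n → Bool) → ℝ}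
    (h : ∀ x, h1 x ≤ h2 x) (x : Fin n → Bool) : Av p i h1 x ≤ Av p i h2 x :=
  Finset.sum_le_sum fun b _ => mul_le_mul_of_nonneg_left (h _) (hp.1 i b)

lemma Ex_sum {m : ℕ} (h : ℕ → (Fin n → Bool) → ℝ) :
    Ex p (fun x => ∑ k ∈ Finset.range m, h k x) = ∑ k ∈ Finset.range m, Ex p (h k) := by
  unfold Ex
  rw [Finset.sum_comm]
  exact Finset.sum_congr rfl fun x _ => Finset.mul_sum _ _ _

noncomputable def T (p : Fin n → Bool → ℝ) (Y : (Fin n → Bool) → ℝ) : ℕ → (Fin n → Bool) → ℝ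
  | 0 => Y
  | k+1 => if h : k < n then Av p ⟨k, h⟩ (T p Y k) else T p Y k

variable {Y : (Fin n → Bool) → ℝ}

lemma T_pos (hp : Good p) (hY : ∀ x, 0 < Y x) : ∀ k x, 0 < T p Y k x := by
  intro k
  induction k with
  | zero => exact hY
  | succ k ih =>
    intro x
    rw [T]
    split
    · exact Av_pos hp _ ih x
    · exact ih x

lemma T_indep (hp : Good p) : ∀ (k : ℕ) (i : Fin n), i.val < k →
    ∀ x b, T p Y k (Function.update x i b) = T p Y k x := by
  intro k
  induction k with
  | zero => intro i hi; omega
  | succ k ih =>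
    intro i hi x b
    by_cases hk : k < n
    · have hT1 : T p Y (k+1) = Av p ⟨k, hk⟩ (T p Y k) := by rw [T, dif_pos hk]
      rw [hT1]
      rcases Nat.lt_succ_iff_lt_or_eq.1 hi with hik | hik
      · unfold Av
        refine Finset.sum_congr rfl fun c _ => ?_
        have hne : i ≠ (⟨k, hk⟩ : Fin n) := by
          intro hcon; rw [hcon] at hik; exact absurd hik (lt_irrefl _)
        rw [Function.update_comm hne, ih i hik]
      · have : i = (⟨k, hk⟩ : Fin n) := Fin.ext hik
        rw [this, Av_update]
    · have hT1 : T p Y (k+1) = T p Y k := by rw [T, dif_neg hk]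
      rw [hT1]
      exact ih i (by omega) x b

lemma Ex_T (hp : Good p) (k : ℕ) : Ex p (T p Y k) = Ex p Y := by
  induction k with
  | zero => rfl
  | succ k ih =>
    rw [T]
    split
    · rw [Ex_Av hp, ih]
    · exact ih

lemma const_of_indep {F : (Fin n → Bool) → ℝ}
    (hF : ∀ (i : Fin n) x b, F (Function.update x i b) = F x) (x x' : Fin n → Bool) :
    F x = F x' := by
  have aux : ∀ s : Finset (Fin n), F (fun j => if j ∈ s then x' j else x j) = F x := by
    intro s
    induction s using Finset.induction with
    | empty => simp
    | @insert a s ha ih =>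
      have : (fun j => if j ∈ insert a s then x' j else x j)
          = Function.update (fun j => if j ∈ s then x' j else x j) a (x' a) := by
        funext j
        rcases eq_or_ne j a with rfl | hj
        · simp
        · rw [Function.update_of_ne hj]
          simp [hj, Finset.mem_insert]
      rw [this, hF, ih]
  have h1 := aux Finset.univ
  simpa using h1.symm

lemma T_eq_Ex (hp : Good p) (hY : ∀ x, 0 < Y x) (x : Fin n → Bool) :
    T p Y n x = Ex p Y := by
  have hconst : ∀ x', T p Y n x' = T p Y n x :=
    fun x' => const_of_indep (fun i z b => T_indep hp n i i.isLt z b) x' x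
  have h1 : Ex p (T p Y n) = Ex p Y := Ex_T hp n
  have h2 : Ex p (T p Y n) = T p Y n x := by
    unfold Ex
    rw [Finset.sum_congr rfl fun x' _ => by rw [hconst x'], ← Finset.sum_mul, sum_W hp,
      one_mul]
  rw [← h1, h2]

noncomputable def EntA (p : Fin n → Bool → ℝ) (i : Fin n) (Y : (Fin n → Bool) → ℝ)
    (x : Fin n → Bool) : ℝ :=
  Av p i (fun z => Y z * Real.log (Y z)) x - Av p i Y x * Real.log (Av p i Y x)

noncomputable def Ent (p : Fin n → Bool → ℝ) (Y : (Fin n → Bool) → ℝ) : ℝ :=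
  Ex p (fun x => Y x * Real.log (Y x)) - Ex p Y * Real.log (Ex p Y)

lemma EntA_indep (i : Fin n) (Y : (Fin n → Bool) → ℝ) (x : Fin n → Bool) (b : Bool) :
    EntA p i Y (Function.update x i b) = EntA p i Y x := by
  unfold EntA
  rw [Av_update, Av_update]

lemma step (hp : Good p) (hY : ∀ x, 0 < Y x) (k : ℕ) (hk : k < n) :
    Ex p (fun x => Y x * (Real.log (T p Y k x) - Real.log (T p Y (k+1) x)))
      ≤ Ex p (EntA p ⟨k, hk⟩ Y) := by
  set i : Fin n := ⟨k, hk⟩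
  have hT1 : T p Y (k+1) = Av p i (T p Y k) := by rw [T, dif_pos hk]
  rw [Ex_split i, Ex_of_indep hp i (fun x b => EntA_indep i Y x b), Finset.sum_comm]
  refine Finset.sum_le_sum fun y _ => ?_
  have hgibbs := gibbs (fun b => p i b) (fun b => Y ((Equiv.funSplitAt i Bool).symm (b, y)))
    (fun b => T p Y k ((Equiv.funSplitAt i Bool).symm (b, y))) (fun b => hp.1 i b) (hp.2 i)
    (fun b => hY _) (fun b => T_pos hp hY k _)
  have hb : ∀ b, T p Y (k+1) ((Equiv.funSplitAt i Bool).symm (b, y))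
      = ∑ c, p i c * T p Y k ((Equiv.funSplitAt i Bool).symm (c, y)) := by
    intro b; rw [hT1, Av_symm]
  have hEA : EntA p i Y ((Equiv.funSplitAt i Bool).symm (false, y))
      = (∑ b, p i b * (Y ((Equiv.funSplitAt i Bool).symm (b, y))
          * Real.log (Y ((Equiv.funSplitAt i Bool).symm (b, y)))))
        - (∑ b, p i b * Y ((Equiv.funSplitAt i Bool).symm (b, y)))
          * Real.log (∑ b, p i b * Y ((Equiv.funSplitAt i Bool).symm (b, y))) := by
    unfold EntA
    rw [Av_symm, Av_symm]
  rw [hEA]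
  have hR : 0 ≤ R p i y := R_nonneg hp i y
  calc (∑ b, p i b * R p i y
        * (Y ((Equiv.funSplitAt i Bool).symm (b, y))
          * (Real.log (T p Y k ((Equiv.funSplitAt i Bool).symm (b, y)))
            - Real.log (T p Y (k+1) ((Equiv.funSplitAt i Bool).symm (b, y))))))
      = R p i y * ∑ b, p i b * (Y ((Equiv.funSplitAt i Bool).symm (b, y))
          * (Real.log (T p Y k ((Equiv.funSplitAt i Bool).symm (b, y)))
            - Real.log (∑ c, p i c * T p Y k ((Equiv.funSplitAt i Bool).symm (c, y))))) := by
        rw [Finset.mul_sum]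
        refine Finset.sum_congr rfl fun b _ => ?_
        rw [hb b]
        ring
    _ ≤ R p i y * ((∑ b, p i b * (Y ((Equiv.funSplitAt i Bool).symm (b, y))
          * Real.log (Y ((Equiv.funSplitAt i Bool).symm (b, y)))))
        - (∑ b, p i b * Y ((Equiv.funSplitAt i Bool).symm (b, y)))
          * Real.log (∑ b, p i b * Y ((Equiv.funSplitAt i Bool).symm (b, y)))) :=
        mul_le_mul_of_nonneg_left hgibbs hR

lemma Ex_congr {h1 h2 : (Fin n → Bool) → ℝ} (h : ∀ x, h1 x = h2 x) : Ex p h1 = Ex p h2 := by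
  unfold Ex; exact Finset.sum_congr rfl fun x _ => by rw [h x]

lemma Ex_const_mul (c : ℝ) (h : (Fin n → Bool) → ℝ) :
    Ex p (fun x => c * h x) = c * Ex p h := by
  unfold Ex
  rw [Finset.mul_sum]
  exact Finset.sum_congr rfl fun x _ => by ring

lemma Ex_sub (h1 h2 : (Fin n → Bool) → ℝ) :
    Ex p (fun x => h1 x - h2 x) = Ex p h1 - Ex p h2 := by
  unfold Ex
  rw [← Finset.sum_sub_distrib]
  exact Finset.sum_congr rfl fun x _ => by ring

lemma Ex_sum_fin (h : Fin n → (Fin n → Bool) → ℝ) :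
    Ex p (fun x => ∑ i, h i x) = ∑ i, Ex p (h i) := by
  unfold Ex
  rw [Finset.sum_comm]
  exact Finset.sum_congr rfl fun x _ => Finset.mul_sum _ _ _

lemma coord (hp : Good p) {f g : (Fin n → Bool) → ℝ} {l : ℝ} (hl : l ≤ 0) (i : Fin n)
    (hg : ∀ x b, g (Function.update x i b) = g x)
    (hfg : ∀ x, 0 ≤ f x - g x ∧ f x - g x ≤ 1) :
    Ex p (EntA p i (fun z => Real.exp (l * f z)))
      ≤ phi (-l) * Ex p (fun z => (f z - g z) * Real.exp (l * f z)) := by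
  set Yl : (Fin n → Bool) → ℝ := fun z => Real.exp (l * f z) with hYl
  have point : ∀ x, EntA p i Yl x
      ≤ Av p i (fun z => phi (-l) * ((f z - g z) * Real.exp (l * f z))) x := by
    intro x
    have hu : (0:ℝ) < Real.exp (l * g x) := Real.exp_pos _
    have h1 := ent_le_u (fun b => p i b) (fun b => Yl (Function.update x i b))
      (Real.exp (l * g x)) (fun b => hp.1 i b) (hp.2 i)
      (fun b => Real.exp_pos _) hu
    refine le_trans (le_of_eq ?_) (le_trans h1 ?_)
    · rfl
    · refine Finset.sum_le_sum fun b _ => ?_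
      refine mul_le_mul_of_nonneg_left ?_ (hp.1 i b)
      set z := Function.update x i b with hz
      have hgz : g z = g x := hg x b
      have hb := hfg z
      have hsc := phi_scale hb.1 hb.2 (c := -l)
      have e1 : Real.exp (l * f z) * Real.exp ((f z - g z) * (-l)) = Real.exp (l * g z) := by
        rw [← Real.exp_add]; congr 1; ring
      have e2 : Yl z * Real.log (Yl z) - Yl z * Real.log (Real.exp (l * g x)) - Yl z
          + Real.exp (l * g x) = Real.exp (l * f z) * phi ((f z - g z) * (-l)) := by
        rw [hYl]
        simp only [Real.log_exp]
        unfold phi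
        rw [← hgz]
        nlinarith [e1]
      rw [e2]
      calc Real.exp (l * f z) * phi ((f z - g z) * (-l))
          ≤ Real.exp (l * f z) * ((f z - g z) * phi (-l)) :=
            mul_le_mul_of_nonneg_left hsc (Real.exp_pos _).le
        _ = phi (-l) * ((f z - g z) * Real.exp (l * f z)) := by ring
  calc Ex p (EntA p i Yl)
      ≤ Ex p (Av p i (fun z => phi (-l) * ((f z - g z) * Real.exp (l * f z)))) :=
        Ex_mono hp point
    _ = Ex p (fun z => phi (-l) * ((f z - g z) * Real.exp (l * f z))) := Ex_Av hp i _
    _ = phi (-l) * Ex p (fun z => (f z - g z) * Real.exp (l * f z)) := Ex_const_mul _ _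

theorem ent_bound (hp : Good p) {f : (Fin n → Bool) → ℝ} {g : Fin n → (Fin n → Bool) → ℝ}
    (hg : ∀ (i : Fin n) x b, g i (Function.update x i b) = g i x)
    (hfg : ∀ x i, 0 ≤ f x - g i x ∧ f x - g i x ≤ 1) {l : ℝ} (hl : l ≤ 0) :
    Ent p (fun x => Real.exp (l * f x))
      ≤ phi (-l) * Ex p (fun x => (∑ i, (f x - g i x)) * Real.exp (l * f x)) := by
  set Yl : (Fin n → Bool) → ℝ := fun z => Real.exp (l * f z) with hYl
  have hYpos : ∀ x, 0 < Yl x := fun x => Real.exp_pos _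
  have tele : Ent p Yl = ∑ k ∈ Finset.range n,
      Ex p (fun x => Yl x * (Real.log (T p Yl k x) - Real.log (T p Yl (k+1) x))) := by
    rw [← Ex_sum]
    have hpt : ∀ x, (∑ k ∈ Finset.range n,
        Yl x * (Real.log (T p Yl k x) - Real.log (T p Yl (k+1) x)))
        = Yl x * Real.log (Yl x) - Yl x * Real.log (Ex p Yl) := by
      intro x
      rw [← Finset.mul_sum, Finset.sum_range_sub' (fun k => Real.log (T p Yl k x))]
      rw [show T p Yl 0 x = Yl x from rfl, T_eq_Ex hp hYpos x]
      ring
    rw [Ex_congr hpt, Ex_sub, show (Ex p fun x => Yl x * Real.log (Ex p Yl))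
      = Ex p Yl * Real.log (Ex p Yl) from by
        rw [show (fun x => Yl x * Real.log (Ex p Yl))
          = (fun x => Real.log (Ex p Yl) * Yl x) from by funext x; ring, Ex_const_mul]
        ring]
    rfl
  set G : ℕ → ℝ := fun k => if h : k < n then Ex p (EntA p ⟨k, h⟩ Yl) else 0 with hG
  have hstep : Ent p Yl ≤ ∑ k ∈ Finset.range n, G k := by
    rw [tele]
    refine Finset.sum_le_sum fun k hk => ?_
    have hkn : k < n := Finset.mem_range.1 hk
    rw [hG]
    simp only [dif_pos hkn]
    exact step hp hYpos k hkn
  have hfin : (∑ k ∈ Finset.range n, G k) = ∑ i : Fin n, Ex p (EntA p i Yl) := by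
    rw [← Fin.sum_univ_eq_sum_range G n]
    refine Finset.sum_congr rfl fun i _ => ?_
    rw [hG]
    simp only [Fin.is_lt, dif_pos, Fin.eta]
  have hcoord : (∑ i : Fin n, Ex p (EntA p i Yl))
      ≤ ∑ i : Fin n, phi (-l) * Ex p (fun z => (f z - g i z) * Real.exp (l * f z)) :=
    Finset.sum_le_sum fun i _ => coord hp hl i (hg i) (fun x => hfg x i)
  have hlast : (∑ i : Fin n, phi (-l) * Ex p (fun z => (f z - g i z) * Real.exp (l * f z)))
      = phi (-l) * Ex p (fun x => (∑ i, (f x - g i x)) * Real.exp (l * f x)) := by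
    rw [← Finset.mul_sum, ← Ex_sum_fin (fun i z => (f z - g i z) * Real.exp (l * f z))]
    congr 1
    refine Ex_congr fun x => ?_
    rw [Finset.sum_mul]
  calc Ent p Yl ≤ ∑ k ∈ Finset.range n, G k := hstep
    _ = ∑ i : Fin n, Ex p (EntA p i Yl) := hfin
    _ ≤ _ := hcoord
    _ = _ := hlast

theorem mgf_bound (hp : Good p) {f : (Fin n → Bool) → ℝ} {g : Fin n → (Fin n → Bool) → ℝ}
    (hg : ∀ (i : Fin n) x b, g i (Function.update x i b) = g i x)
    (hfg : ∀ x i, 0 ≤ f x - g i x ∧ f x - g i x ≤ 1)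
    (hsum : ∀ x, (∑ i, (f x - g i x)) ≤ f x) {l : ℝ} (hl : l < 0) :
    Ex p (fun x => Real.exp (l * f x)) ≤ Real.exp ((Real.exp l - 1) * Ex p f) := by
  classical
  set m := Ex p f with hm
  set G : ℝ → ℝ := fun t => ∑ x, W p x * Real.exp (t * f x) with hGdef
  have hGpos : ∀ t, 0 < G t := fun t =>
    sum_pos_of (W p) _ (W_nonneg hp) (sum_W hp) (fun x => Real.exp_pos _)
  set D : ℝ → ℝ := fun t => ∑ x, W p x * (Real.exp (t * f x) * f x) with hDdef
  have hGd : ∀ t, HasDerivAt G (D t) t := by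
    intro t
    refine HasDerivAt.fun_sum fun x _ => ?_
    have h1 : HasDerivAt (fun t : ℝ => t * f x) (f x) t := hasDerivAt_mul_const (f x)
    exact (h1.exp).const_mul (W p x)
  have core : ∀ t : ℝ, t ≤ 0 → (1 - Real.exp (-t)) * D t ≤ G t * Real.log (G t) := by
    intro t ht
    have hent := ent_bound hp hg hfg ht
    have h1 : Ent p (fun x => Real.exp (t * f x)) = t * D t - G t * Real.log (G t) := by
      unfold Ent
      have e1 : Ex p (fun x => Real.exp (t * f x) * Real.log (Real.exp (t * f x)))
          = t * D t := by
        rw [hDdef]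
        unfold Ex
        rw [Finset.mul_sum]
        refine Finset.sum_congr rfl fun x _ => ?_
        simp only [Real.log_exp]; ring
      have e2 : Ex p (fun x => Real.exp (t * f x)) = G t := rfl
      rw [e1, e2]
    have h2 : Ex p (fun x => (∑ i, (f x - g i x)) * Real.exp (t * f x)) ≤ D t := by
      have ha : Ex p (fun x => (∑ i, (f x - g i x)) * Real.exp (t * f x))
          ≤ Ex p (fun x => f x * Real.exp (t * f x)) :=
        Ex_mono hp fun x => mul_le_mul_of_nonneg_right (hsum x) (Real.exp_pos _).le
      have hb : Ex p (fun x => f x * Real.exp (t * f x)) = D t := by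
        unfold Ex
        rw [hDdef]
        exact Finset.sum_congr rfl fun x _ => by ring
      rw [hb] at ha
      exact ha
    have h3 := (hent.trans (mul_le_mul_of_nonneg_left h2 (phi_nonneg (-t))))
    rw [h1] at h3
    unfold phi at h3
    nlinarith [h3]
  set L : ℝ → ℝ := fun t => Real.log (G t) with hLdef
  have hLd : ∀ t, HasDerivAt L (D t / G t) t := fun t => (hGd t).log (hGpos t).ne'
  have hG0 : G 0 = 1 := by
    rw [hGdef]
    simp only [zero_mul, Real.exp_zero, mul_one]
    exact sum_W hp
  have hL0 : L 0 = 0 := by rw [hLdef]; simp only [hG0, Real.log_one]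
  have hD0 : D 0 = m := by
    rw [hDdef, hm]
    unfold Ex
    refine Finset.sum_congr rfl fun x _ => ?_
    rw [zero_mul, Real.exp_zero, one_mul]
  set K : ℝ → ℝ := fun t => L t / (Real.exp t - 1) with hKdef
  have hexpne : ∀ t : ℝ, t < 0 → Real.exp t - 1 < 0 := by
    intro t ht
    have : Real.exp t < 1 := Real.exp_lt_one_iff.2 ht
    linarith
  have hKd : ∀ t < (0:ℝ), HasDerivAt K
      ((D t / G t * (Real.exp t - 1) - L t * Real.exp t) / (Real.exp t - 1) ^ 2) t := by
    intro t ht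
    exact (hLd t).div ((Real.hasDerivAt_exp t).sub_const 1) (hexpne t ht).ne
  have hKderiv : ∀ t ∈ interior (Set.Iio (0:ℝ)), deriv K t ≤ 0 := by
    intro t ht
    rw [interior_Iio] at ht
    rw [(hKd t ht).deriv]
    have hden : (0:ℝ) < (Real.exp t - 1) ^ 2 := pow_two_pos_of_ne_zero (hexpne t ht).ne
    refine div_nonpos_of_nonpos_of_nonneg ?_ hden.le
    have hcore := core t (le_of_lt ht)
    have hG := hGpos t
    have h1 : (1 - Real.exp (-t)) * (D t / G t) ≤ L t := by
      rw [← mul_div_assoc, div_le_iff₀ hG]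
      calc (1 - Real.exp (-t)) * D t ≤ G t * Real.log (G t) := hcore
        _ = L t * G t := by rw [hLdef]; ring
    have e3 : Real.exp t * (1 - Real.exp (-t)) = Real.exp t - 1 := by
      rw [Real.exp_neg]
      field_simp
    have h3 : (Real.exp t - 1) * (D t / G t) ≤ Real.exp t * L t := by
      calc (Real.exp t - 1) * (D t / G t)
          = Real.exp t * ((1 - Real.exp (-t)) * (D t / G t)) := by rw [← e3]; ring
        _ ≤ Real.exp t * L t := mul_le_mul_of_nonneg_left h1 (Real.exp_pos t).le
    linarith
  have hanti : AntitoneOn K (Set.Iio 0) := by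
    refine antitoneOn_of_deriv_nonpos (convex_Iio 0)
      (fun t ht => (hKd t ht).continuousAt.continuousWithinAt)
      (fun t ht => by
        rw [interior_Iio] at ht
        exact (hKd t ht).differentiableAt.differentiableWithinAt) hKderiv
  have hLd0 : HasDerivAt L m 0 := by
    have h := hLd 0
    rwa [hG0, hD0, div_one] at h
  have hslopeL : Filter.Tendsto (fun u => L u / u) (nhdsWithin 0 {(0:ℝ)}ᶜ) (nhds m) := by
    have h := hasDerivAt_iff_tendsto_slope.1 hLd0
    exact h.congr fun u => by rw [slope_def_field, hL0, sub_zero, sub_zero]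
  have hslopeE : Filter.Tendsto (fun u => u / (Real.exp u - 1))
      (nhdsWithin 0 {(0:ℝ)}ᶜ) (nhds 1) := by
    have h := hasDerivAt_iff_tendsto_slope.1 (Real.hasDerivAt_exp 0)
    have h2 : Filter.Tendsto (fun u => (Real.exp u - 1) / u)
        (nhdsWithin 0 {(0:ℝ)}ᶜ) (nhds 1) := by
      have h1 := h.congr fun u => by
        rw [slope_def_field, Real.exp_zero, sub_zero]
      rwa [Real.exp_zero] at h1
    have h3 := h2.inv₀ (by norm_num)
    rw [inv_one] at h3
    exact h3.congr fun u => by rw [inv_div]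
  have hKlim : Filter.Tendsto K (nhdsWithin 0 (Set.Iio (0:ℝ))) (nhds m) := by
    have hmul := hslopeL.mul hslopeE
    rw [mul_one] at hmul
    have hev : (fun u => (L u / u) * (u / (Real.exp u - 1))) =ᶠ[nhdsWithin 0 {(0:ℝ)}ᶜ] K := by
      filter_upwards [eventually_mem_nhdsWithin] with u hu
      have hu' : u ≠ 0 := hu
      rw [hKdef]
      rw [div_mul_div_comm, mul_comm (L u) u, mul_div_mul_left _ _ hu']
    have hmono : nhdsWithin 0 (Set.Iio (0:ℝ)) ≤ nhdsWithin 0 {(0:ℝ)}ᶜ :=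
      nhdsWithin_mono 0 fun x hx => ne_of_lt hx
    exact ((hmul.congr' hev).mono_left hmono)
  have hKl : m ≤ K l := by
    have hev : ∀ᶠ u in nhdsWithin 0 (Set.Iio (0:ℝ)), K u ≤ K l := by
      filter_upwards [Ioo_mem_nhdsLT_of_mem (Set.mem_Ioc.2 ⟨hl, le_refl (0:ℝ)⟩)] with u hu
      exact hanti (Set.mem_Iio.2 hl) (Set.mem_Iio.2 hu.2) hu.1.le
    exact le_of_tendsto hKlim hev
  have hL_le : L l ≤ (Real.exp l - 1) * m := by
    have hneg := hexpne l hl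
    rw [hKdef] at hKl
    have h4 := (le_div_iff_of_neg hneg).1 hKl
    linarith
  calc Ex p (fun x => Real.exp (l * f x)) = G l := rfl
    _ = Real.exp (L l) := (Real.exp_log (hGpos l)).symm
    _ ≤ Real.exp ((Real.exp l - 1) * m) := Real.exp_le_exp.2 hL_le
    _ = Real.exp ((Real.exp l - 1) * Ex p f) := by rw [hm]

lemma chernoff (hp : Good p) {f : (Fin n → Bool) → ℝ} {g : Fin n → (Fin n → Bool) → ℝ}
    (hg : ∀ (i : Fin n) x b, g i (Function.update x i b) = g i x)
    (hfg : ∀ x i, 0 ≤ f x - g i x ∧ f x - g i x ≤ 1)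
    (hsum : ∀ x, (∑ i, (f x - g i x)) ≤ f x) {l t : ℝ} (hl : l < 0) :
    ∑ x ∈ Finset.univ.filter (fun x => f x ≤ t), W p x
      ≤ Real.exp (-(l * t) + (Real.exp l - 1) * Ex p f) := by
  have hmgf := mgf_bound hp hg hfg hsum hl
  calc ∑ x ∈ Finset.univ.filter (fun x => f x ≤ t), W p x
      ≤ ∑ x ∈ Finset.univ.filter (fun x => f x ≤ t),
          W p x * (Real.exp (-(l * t)) * Real.exp (l * f x)) := by
        refine Finset.sum_le_sum fun x hx => ?_
        have hfx : f x ≤ t := (Finset.mem_filter.1 hx).2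
        have h2 : l * t ≤ l * f x := mul_le_mul_of_nonpos_left hfx hl.le
        have h3 : (1:ℝ) ≤ Real.exp (-(l * t)) * Real.exp (l * f x) := by
          rw [← Real.exp_add]
          exact Real.one_le_exp (by linarith)
        nlinarith [W_nonneg hp x, h3]
    _ ≤ ∑ x, W p x * (Real.exp (-(l * t)) * Real.exp (l * f x)) :=
        Finset.sum_le_sum_of_subset_of_nonneg (Finset.filter_subset _ _)
          (fun x _ _ => mul_nonneg (W_nonneg hp x) (by positivity))
    _ = Real.exp (-(l * t)) * Ex p (fun x => Real.exp (l * f x)) := by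
        unfold Ex
        rw [Finset.mul_sum]
        exact Finset.sum_congr rfl fun x _ => by ring
    _ ≤ Real.exp (-(l * t)) * Real.exp ((Real.exp l - 1) * Ex p f) :=
        mul_le_mul_of_nonneg_left hmgf (Real.exp_pos _).le
    _ = Real.exp (-(l * t) + (Real.exp l - 1) * Ex p f) := (Real.exp_add _ _).symm

lemma numeric {δ : ℝ} (h0 : 0 < δ) (h1 : δ < 1) :
    δ ^ 2 / 2 ≤ (1 - δ) * Real.log (1 - δ) + δ := by
  set u := 1 - δ with hu
  have hu0 : 0 < u := by rw [hu]; linarith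
  have hu1 : u < 1 := by rw [hu]; linarith
  set s := -Real.log u with hs
  have hs0 : 0 < s := by
    have := Real.log_neg hu0 hu1
    rw [hs]; linarith
  have hsinh := Real.self_lt_sinh_iff.2 hs0
  rw [Real.sinh_eq] at hsinh
  have hes : Real.exp (-s) = u := by rw [hs, neg_neg, Real.exp_log hu0]
  have hes2 : Real.exp s = u⁻¹ := by
    rw [hs, Real.exp_neg, Real.exp_log hu0]
  rw [hes, hes2] at hsinh
  have key : u * s < (1 - u^2)/2 := by
    have h2 := mul_lt_mul_of_pos_left hsinh hu0
    have h3 : u * ((u⁻¹ - u)/2) = (1 - u^2)/2 := by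
      field_simp
    rw [h3] at h2
    exact h2
  have hlogu : Real.log u = -s := by rw [hs]; ring
  have hδu : δ = 1 - u := by rw [hu]; ring
  rw [hlogu]
  nlinarith [key]

theorem main_fin (hp : Good p) {f : (Fin n → Bool) → ℝ} (hf : _root_.SelfBounding f) {δ : ℝ}
    (hδ : 0 < δ) :
    ∑ x ∈ Finset.univ.filter (fun x => f x ≤ (1 - δ) * Ex p f), W p x
      ≤ Real.exp (-δ ^ 2 * Ex p f / 2) := by
  obtain ⟨g, hg, hfg, hsum⟩ := hf
  have hf0 : ∀ x, 0 ≤ f x := fun x =>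
    le_trans (Finset.sum_nonneg fun i _ => (hfg x i).1) (hsum x)
  have hm0 : 0 ≤ Ex p f := Finset.sum_nonneg fun x _ => mul_nonneg (W_nonneg hp x) (hf0 x)
  rcases lt_or_ge δ 1 with hδ1 | hδ1
  · set l := Real.log (1 - δ) with hl
    have h1δ : 0 < 1 - δ := by linarith
    have hl0 : l < 0 := Real.log_neg h1δ (by linarith)
    have hch := chernoff hp hg hfg hsum (t := (1 - δ) * Ex p f) hl0
    have hexp : Real.exp l = 1 - δ := Real.exp_log h1δ
    refine hch.trans (Real.exp_le_exp.2 ?_)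
    rw [hexp]
    have hnum := numeric hδ hδ1
    rw [← hl] at hnum
    nlinarith [mul_le_mul_of_nonneg_right hnum hm0]
  · rcases eq_or_lt_of_le hm0 with hmz | hmz
    · calc ∑ x ∈ Finset.univ.filter (fun x => f x ≤ (1 - δ) * Ex p f), W p x
          ≤ ∑ x, W p x := Finset.sum_le_sum_of_subset_of_nonneg (Finset.filter_subset _ _)
            (fun x _ _ => W_nonneg hp x)
        _ = 1 := sum_W hp
        _ ≤ Real.exp (-δ ^ 2 * Ex p f / 2) := by
            rw [← hmz]
            norm_num
    · rcases eq_or_lt_of_le hδ1 with hδe | hδe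
      · have hl0 : -Real.log 2 < 0 := neg_neg_of_pos (Real.log_pos (by norm_num))
        have hch := chernoff hp hg hfg hsum (t := (1 - δ) * Ex p f) hl0
        refine hch.trans (Real.exp_le_exp.2 ?_)
        rw [Real.exp_neg, Real.exp_log (by norm_num : (0:ℝ) < 2)]
        rw [← hδe]
        ring_nf
        nlinarith [hmz]
      · have hempty : Finset.univ.filter (fun x => f x ≤ (1 - δ) * Ex p f) = ∅ := by
          refine Finset.filter_eq_empty_iff.2 fun x _ => ?_
          have hneg : (1 - δ) * Ex p f < 0 := mul_neg_of_neg_of_pos (by linarith) hmz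
          exact not_le.2 (lt_of_lt_of_le hneg (hf0 x))
        rw [hempty]
        simp only [Finset.sum_empty]
        positivity

end SBP


/-- Lower tail for self-bounding functions of independent `{0,1}`-valued random
variables: `Pr[Z ≤ (1−δ) E Z] ≤ e^{−δ² E Z / 2}` for every `δ > 0`. -/
theorem self_bounding_lower_tail
    {Ω : Type*} [MeasurableSpace Ω] (μ : Measure Ω) [IsProbabilityMeasure μ]
    {n : ℕ} (X : Fin n → Ω → Bool) (hXm : ∀ i, Measurable (X i))
    (hXind : iIndepFun X μ)
    (f : (Fin n → Bool) → ℝ) (hf : SelfBounding f)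
    (Z : Ω → ℝ) (hZ : ∀ ω, Z ω = f (fun i => X i ω)) (δ : ℝ) (hδ : 0 < δ) :
    (μ {ω | Z ω ≤ (1 - δ) * (∫ ω', Z ω' ∂μ)}).toReal
      ≤ Real.exp (-δ ^ 2 * (∫ ω', Z ω' ∂μ) / 2) := by
  classical
  set Φ : Ω → (Fin n → Bool) := fun ω i => X i ω with hΦdef
  have hΦm : Measurable Φ := measurable_pi_lambda _ hXm
  set ν : Measure (Fin n → Bool) := μ.map Φ with hνdef
  have hprob : IsProbabilityMeasure ν := Measure.isProbabilityMeasure_map hΦm.aemeasurable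
  set p : Fin n → Bool → ℝ := fun i b => (μ (X i ⁻¹' ({b} : Set Bool))).toReal with hpdef
  have hp : SBP.Good p := by
    constructor
    · exact fun i b => ENNReal.toReal_nonneg
    · intro i
      rw [Fintype.sum_bool]
      have hu : X i ⁻¹' {true} ∪ X i ⁻¹' {false} = Set.univ := by
        ext ω
        simp only [Set.mem_union, Set.mem_preimage, Set.mem_singleton_iff, Set.mem_univ,
          iff_true]
        cases h : X i ω
        · exact Or.inr rfl
        · exact Or.inl rfl
      have hdis : Disjoint (X i ⁻¹' ({true} : Set Bool)) (X i ⁻¹' {false}) := by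
        refine Set.disjoint_left.2 fun ω h1 h2 => ?_
        simp only [Set.mem_preimage, Set.mem_singleton_iff] at h1 h2
        rw [h1] at h2
        exact Bool.noConfusion h2
      have hmeas : μ (X i ⁻¹' {true}) + μ (X i ⁻¹' {false}) = 1 := by
        rw [← measure_union hdis ((hXm i) (measurableSet_singleton false)), hu, measure_univ]
      rw [hpdef]
      simp only
      rw [← ENNReal.toReal_add (measure_ne_top μ _) (measure_ne_top μ _), hmeas,
        ENNReal.toReal_one]
  have hsing : ∀ x : Fin n → Bool, ν {x} = ∏ i, μ (X i ⁻¹' {x i}) := by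
    intro x
    rw [hνdef, Measure.map_apply hΦm (measurableSet_singleton x)]
    have hpre : Φ ⁻¹' {x} = ⋂ i, X i ⁻¹' {x i} := by
      ext ω
      simp only [Set.mem_preimage, Set.mem_singleton_iff, Set.mem_iInter, hΦdef]
      exact funext_iff
    rw [hpre]
    exact hXind.meas_iInter fun i => ⟨{x i}, measurableSet_singleton _, rfl⟩
  have hWν : ∀ x, SBP.W p x = (ν {x}).toReal := by
    intro x
    rw [hsing x, ENNReal.toReal_prod]
    rfl
  have hfmeas : Measurable f := measurable_of_countable f
  have hI : (∫ ω', Z ω' ∂μ) = SBP.Ex p f := by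
    have h1 : (∫ ω', Z ω' ∂μ) = ∫ ω', f (Φ ω') ∂μ :=
      integral_congr_ae (Filter.Eventually.of_forall fun ω => hZ ω)
    rw [h1, ← integral_map hΦm.aemeasurable hfmeas.aestronglyMeasurable, ← hνdef,
      integral_fintype (Integrable.of_finite)]
    unfold SBP.Ex
    exact Finset.sum_congr rfl fun x _ => by rw [hWν x, smul_eq_mul, measureReal_def]
  rw [hI]
  set c := (1 - δ) * SBP.Ex p f with hc
  have hset : {ω | Z ω ≤ c} = Φ ⁻¹' {x | f x ≤ c} := by
    ext ω
    simp only [Set.mem_setOf_eq, Set.mem_preimage]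
    rw [hZ ω]
  have hμν : μ {ω | Z ω ≤ c} = ν {x | f x ≤ c} := by
    rw [hset, hνdef, Measure.map_apply hΦm (Set.to_countable _).measurableSet]
  have hsum : (ν {x | f x ≤ c}).toReal
      = ∑ x ∈ Finset.univ.filter (fun x => f x ≤ c), SBP.W p x := by
    have hU : {x : Fin n → Bool | f x ≤ c}
        = ⋃ x ∈ Finset.univ.filter (fun x : Fin n → Bool => f x ≤ c), ({x} : Set _) := by
      ext x
      simp
    rw [hU, measure_biUnion_finset ?disj ?meas]
    · rw [ENNReal.toReal_sum (fun x _ => measure_ne_top ν _)]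
      exact Finset.sum_congr rfl fun x _ => (hWν x).symm
    case disj =>
      intro a _ b _ hab
      simp only [Function.onFun]
      exact Set.disjoint_singleton.2 hab
    case meas => exact fun x _ => measurableSet_singleton x
  rw [hμν, hsum]
  exact SBP.main_fin hp hf hδ
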